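/- arXiv:2409.01277 — 2 statements merged into one kernel-verified Lean document; each statement's English description precedes it below -/
import Mathlib

section
/- Let K_P and K_D be n×n real symmetric positive definite matrices, and let A be the 2n×2n real block matrix A = [[0, I], [−K_P, −K_D]]. Then A is Hurwitz: every eigenvalue of A over ℂ has strictly negative real part. -/
open Matrix Complex

-- helper: complexified real PosDef quadratic form
lemma posdef_complex_re_im {n : ℕ} {M : Matrix (Fin n) (Fin n) ℝ} (hM : M.PosDef)
    (x : Fin n → ℂ) (hx : x ≠ 0) :
    0 < (star x ⬝ᵥ (M.map (Complex.ofReal)) *ᵥ x).re ∧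
      (star x ⬝ᵥ (M.map (Complex.ofReal)) *ᵥ x).im = 0 := by
  classical
  set u : Fin n → ℝ := fun i => (x i).re with hu
  set w : Fin n → ℝ := fun i => (x i).im with hw
  have hre : (star x ⬝ᵥ (M.map (Complex.ofReal)) *ᵥ x).re
      = u ⬝ᵥ M *ᵥ u + w ⬝ᵥ M *ᵥ w := by
    simp only [dotProduct, Matrix.mulVec, Matrix.map_apply, Finset.mul_sum, Complex.re_sum,
      Pi.star_apply]
    rw [← Finset.sum_add_distrib]
    refine Finset.sum_congr rfl fun i _ => ?_
    rw [← Finset.sum_add_distrib]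
    refine Finset.sum_congr rfl fun j _ => ?_
    simp [Complex.mul_re, Complex.mul_im, hu, hw]
  have him : (star x ⬝ᵥ (M.map (Complex.ofReal)) *ᵥ x).im
      = u ⬝ᵥ M *ᵥ w - w ⬝ᵥ M *ᵥ u := by
    simp only [dotProduct, Matrix.mulVec, Matrix.map_apply, Finset.mul_sum, Complex.im_sum,
      Pi.star_apply]
    rw [← Finset.sum_sub_distrib]
    refine Finset.sum_congr rfl fun i _ => ?_
    rw [← Finset.sum_sub_distrib]
    refine Finset.sum_congr rfl fun j _ => ?_
    simp [Complex.mul_re, Complex.mul_im, hu, hw]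
    ring
  have hsymm : u ⬝ᵥ M *ᵥ w = w ⬝ᵥ M *ᵥ u := by
    have hMt : Mᵀ = M := by
      have := hM.isHermitian
      simpa [Matrix.IsHermitian, Matrix.conjTranspose, Matrix.map, Matrix.transpose] using this
    rw [Matrix.dotProduct_mulVec, ← Matrix.mulVec_transpose, hMt, dotProduct_comm]
  constructor
  · rw [hre]
    have hne : u ≠ 0 ∨ w ≠ 0 := by
      by_contra h
      push_neg at h
      apply hx
      funext i
      have h1 := congrFun h.1 i
      have h2 := congrFun h.2 i
      simp [hu, hw] at h1 h2
      exact Complex.ext h1 h2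
    have hq : ∀ v : Fin n → ℝ, 0 ≤ v ⬝ᵥ M *ᵥ v := fun v => by
      simpa using (Matrix.posSemidef_iff_dotProduct_mulVec.mp hM.posSemidef).2 v
    have hq' : ∀ v : Fin n → ℝ, v ≠ 0 → 0 < v ⬝ᵥ M *ᵥ v := fun v hv => by
      simpa using (Matrix.posDef_iff_dotProduct_mulVec.mp hM).2 hv
    rcases hne with h | h
    · have := hq' u h; have := hq w; linarith
    · have := hq' w h; have := hq u; linarith
  · rw [him, hsymm, sub_self]

lemma quadratic_root_re_neg {α β γ : ℝ} (hα : 0 < α) (hβ : 0 < β) (hγ : 0 < γ)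
    {μ : ℂ} (h : μ ^ 2 * (α : ℂ) + μ * (β : ℂ) + (γ : ℂ) = 0) : μ.re < 0 := by
  have hRe := congrArg Complex.re h
  have hIm := congrArg Complex.im h
  simp [pow_two, Complex.mul_re, Complex.mul_im] at hRe hIm
  by_contra hc
  push_neg at hc
  have ht : μ.im = 0 := by
    have h2 : μ.im * (2 * μ.re * α + β) = 0 := by nlinarith [hIm]
    have : 2 * μ.re * α + β > 0 := by nlinarith
    have := mul_eq_zero.mp h2
    rcases this with h | h
    · exact h
    · linarith
  rw [ht] at hRe
  nlinarith [mul_nonneg (mul_nonneg hc hc) hα.le, mul_nonneg hc hβ.le]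


/-- if `K_P`, `K_D` are real symmetric positive definite `n × n` matrices,
then the block matrix `A = [[0, I], [-K_P, -K_D]]` is Hurwitz: every eigenvalue of `A`
over `ℂ` (i.e., every complex root of its characteristic polynomial) has strictly
negative real part. -/
theorem block_matrix_hurwitz {n : ℕ} (KP KD : Matrix (Fin n) (Fin n) ℝ)
    (hKP : KP.PosDef) (hKD : KD.PosDef) :
    ∀ μ : ℂ,
      ((Matrix.fromBlocks (0 : Matrix (Fin n) (Fin n) ℝ) (1 : Matrix (Fin n) (Fin n) ℝ)
            (-KP) (-KD)).map (Complex.ofReal)).charpoly.IsRoot μ →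
        μ.re < 0 := by
  classical
  intro μ hroot
  set Mc := (Matrix.fromBlocks (0 : Matrix (Fin n) (Fin n) ℝ) (1 : Matrix (Fin n) (Fin n) ℝ)
      (-KP) (-KD)).map (Complex.ofReal) with hMcdef
  have hdet : (Matrix.diagonal (fun _ => μ) - Mc).det = 0 := by
    have h1 : ((charmatrix Mc).map (Polynomial.evalRingHom μ)).det = 0 := by
      rw [show (charmatrix Mc).map ⇑(Polynomial.evalRingHom μ)
          = (Polynomial.evalRingHom μ).mapMatrix (charmatrix Mc) from rfl, ← RingHom.map_det]
      exact hroot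
    rw [show Matrix.diagonal (fun _ => μ) - Mc
        = (charmatrix Mc).map (Polynomial.evalRingHom μ) by
      ext i j
      by_cases h : i = j <;> simp [charmatrix_apply, Matrix.diagonal, h]]
    exact h1
  obtain ⟨v, hv, hveq⟩ := Matrix.exists_mulVec_eq_zero_iff.mpr hdet
  have hMv : Mc *ᵥ v = μ • v := by
    rw [Matrix.sub_mulVec] at hveq
    have hd : Matrix.diagonal (fun _ => μ) *ᵥ v = μ • v := by
      funext i; simp [Matrix.mulVec_diagonal]
    rw [hd] at hveq
    linear_combination (norm := module) -hveq
  set x : Fin n → ℂ := v ∘ Sum.inl with hxdef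
  set y : Fin n → ℂ := v ∘ Sum.inr with hydef
  set KPc := KP.map (Complex.ofReal) with hKPc
  set KDc := KD.map (Complex.ofReal) with hKDc
  have hMcblocks : Mc = Matrix.fromBlocks (0 : Matrix (Fin n) (Fin n) ℂ)
      (1 : Matrix (Fin n) (Fin n) ℂ) (-KPc) (-KDc) := by
    rw [hMcdef, Matrix.fromBlocks_map]
    ext i j
    cases i <;> cases j <;>
      simp [Matrix.one_apply, hKPc, hKDc, apply_ite Complex.ofReal]
  have hmul := hMv
  rw [hMcblocks, Matrix.fromBlocks_mulVec] at hmul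
  have h1 : y = μ • x := by
    funext i
    have := congrFun hmul (Sum.inl i)
    simpa [hxdef, hydef] using this
  have h2 : (-KPc) *ᵥ x + (-KDc) *ᵥ y = μ • y := by
    funext i
    have := congrFun hmul (Sum.inr i)
    simpa [hxdef, hydef] using this
  have hxne : x ≠ 0 := by
    intro hx0
    apply hv
    have hy0 : y = 0 := by rw [h1, hx0, smul_zero]
    funext i
    cases i with
    | inl i => exact congrFun hx0 i
    | inr i => exact congrFun hy0 i
  -- the quadratic relation
  have hquad : μ ^ 2 • x + μ • (KDc *ᵥ x) + KPc *ᵥ x = 0 := by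
    rw [h1] at h2
    rw [Matrix.mulVec_smul] at h2
    have hps : μ • (μ • x) = μ ^ 2 • x := by rw [smul_smul, ← pow_two]
    rw [hps, Matrix.neg_mulVec, Matrix.neg_mulVec, smul_neg] at h2
    linear_combination (norm := module) -h2
  have hdot := congrArg (fun z => star x ⬝ᵥ z) hquad
  simp only [dotProduct_add, dotProduct_smul, dotProduct_zero,
    smul_eq_mul] at hdot
  -- positivity facts
  obtain ⟨hPre, hPim⟩ := posdef_complex_re_im hKP x hxne
  obtain ⟨hDre, hDim⟩ := posdef_complex_re_im hKD x hxne
  have hone : Matrix.PosDef (1 : Matrix (Fin n) (Fin n) ℝ) := Matrix.PosDef.one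
  obtain ⟨hAre, hAim⟩ := posdef_complex_re_im hone x hxne
  have hmap1 : ((1 : Matrix (Fin n) (Fin n) ℝ).map (Complex.ofReal)) *ᵥ x = x := by
    rw [show ((1 : Matrix (Fin n) (Fin n) ℝ).map (Complex.ofReal))
        = (1 : Matrix (Fin n) (Fin n) ℂ) by
      ext i j; by_cases h : i = j <;> simp [Matrix.one_apply, h]]
    exact Matrix.one_mulVec x
  rw [hmap1] at hAre hAim
  have ha : (star x ⬝ᵥ x) = (((star x ⬝ᵥ x).re : ℝ) : ℂ) := Complex.ext (by simp) (by simp [hAim])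
  have hb : (star x ⬝ᵥ KDc *ᵥ x) = (((star x ⬝ᵥ KDc *ᵥ x).re : ℝ) : ℂ) :=
    Complex.ext (by simp) (by simp [hKDc, hDim])
  have hc : (star x ⬝ᵥ KPc *ᵥ x) = (((star x ⬝ᵥ KPc *ᵥ x).re : ℝ) : ℂ) :=
    Complex.ext (by simp) (by simp [hKPc, hPim])
  have hPre' : 0 < (star x ⬝ᵥ KPc *ᵥ x).re := by simpa [hKPc] using hPre
  have hDre' : 0 < (star x ⬝ᵥ KDc *ᵥ x).re := by simpa [hKDc] using hDre
  apply quadratic_root_re_neg hAre hDre' hPre'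
  rw [← ha, ← hb, ← hc]
  linear_combination hdot
end

section
/- (Case (i) gain-adaptation inequality for the bipedal controller.) Let s ∈ ℝⁿ, ξ ∈ ℝ^{2n}, σ ∈ ℝⁿ, and reals α > 1, ε > 0, β₀*, β₁*, β̂₀, β̂₁ ≥ 0. Suppose ‖σ‖ ≤ β₀* + β₁*·‖ξ‖ and ‖s‖ ≥ √(ε/(α²−1)), and set c = β̂₀ + β̂₁·‖ξ‖. Then sᵀ( σ − α·c·s/√(‖s‖² + ε) ) + (β̂₀ − β₀*)·‖s‖ + (β̂₁ − β₁*)·‖ξ‖·‖s‖ ≤ 0. -/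
/-- Case (i) gain-adaptation inequality for the bipedal controller:
with `c = β̂₀ + β̂₁‖ξ‖`, if `‖σ‖ ≤ β₀* + β₁*‖ξ‖` and `‖s‖ ≥ √(ε/(α²-1))`, then
`sᵀ(σ - α c s/√(‖s‖²+ε)) + (β̂₀ - β₀*)‖s‖ + (β̂₁ - β₁*)‖ξ‖‖s‖ ≤ 0`. -/
theorem case_i_inequality_biped {n : ℕ}
    (s σ : EuclideanSpace ℝ (Fin n)) (ξ : EuclideanSpace ℝ (Fin (2 * n)))
    (α ε βs₀ βs₁ βh₀ βh₁ : ℝ)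
    (hα : 1 < α) (hε : 0 < ε)
    (hβs₀ : 0 ≤ βs₀) (hβs₁ : 0 ≤ βs₁) (hβh₀ : 0 ≤ βh₀) (hβh₁ : 0 ≤ βh₁)
    (hσ : ‖σ‖ ≤ βs₀ + βs₁ * ‖ξ‖)
    (hs : Real.sqrt (ε / (α ^ 2 - 1)) ≤ ‖s‖) :
    (inner ℝ s (σ - ((α * (βh₀ + βh₁ * ‖ξ‖)) / Real.sqrt (‖s‖ ^ 2 + ε)) • s) : ℝ) +
        (βh₀ - βs₀) * ‖s‖ + (βh₁ - βs₁) * ‖ξ‖ * ‖s‖ ≤ 0 := by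
  set c := βh₀ + βh₁ * ‖ξ‖ with hc
  have hξ : (0:ℝ) ≤ ‖ξ‖ := norm_nonneg _
  have hsn : (0:ℝ) ≤ ‖s‖ := norm_nonneg _
  have hc0 : 0 ≤ c := by positivity
  have hα2 : (0:ℝ) < α ^ 2 - 1 := by nlinarith
  -- ‖s‖² ≥ ε/(α²-1)
  have hsq : ε / (α ^ 2 - 1) ≤ ‖s‖ ^ 2 := by
    have := Real.sq_sqrt (le_of_lt (div_pos hε hα2))
    nlinarith [Real.sqrt_nonneg (ε / (α ^ 2 - 1))]
  have hkey : ε ≤ (α ^ 2 - 1) * ‖s‖ ^ 2 := by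
    rw [div_le_iff₀ hα2] at hsq; linarith [hsq]
  -- √(‖s‖²+ε) ≤ α‖s‖
  have hq : Real.sqrt (‖s‖ ^ 2 + ε) ≤ α * ‖s‖ := by
    have h1 : ‖s‖ ^ 2 + ε ≤ (α * ‖s‖) ^ 2 := by nlinarith
    calc Real.sqrt (‖s‖ ^ 2 + ε) ≤ Real.sqrt ((α * ‖s‖) ^ 2) := Real.sqrt_le_sqrt h1
      _ = α * ‖s‖ := Real.sqrt_sq (by positivity)
  have hqpos : 0 < Real.sqrt (‖s‖ ^ 2 + ε) := Real.sqrt_pos.mpr (by positivity)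
  -- inner s σ ≤ ‖s‖ (βs₀ + βs₁‖ξ‖)
  have hinσ : (inner ℝ s σ : ℝ) ≤ ‖s‖ * (βs₀ + βs₁ * ‖ξ‖) := by
    calc (inner ℝ s σ : ℝ) ≤ ‖s‖ * ‖σ‖ := real_inner_le_norm s σ
      _ ≤ ‖s‖ * (βs₀ + βs₁ * ‖ξ‖) := mul_le_mul_of_nonneg_left hσ hsn
  have hinner : (inner ℝ s (σ - ((α * c) / Real.sqrt (‖s‖ ^ 2 + ε)) • s) : ℝ)
      = (inner ℝ s σ : ℝ) - (α * c) / Real.sqrt (‖s‖ ^ 2 + ε) * ‖s‖ ^ 2 := by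
    rw [inner_sub_right, real_inner_smul_right, real_inner_self_eq_norm_sq]
  rw [hinner]
  -- c‖s‖ ≤ αc‖s‖²/√(‖s‖²+ε)
  have hmain : c * ‖s‖ ≤ (α * c) / Real.sqrt (‖s‖ ^ 2 + ε) * ‖s‖ ^ 2 := by
    rw [div_mul_eq_mul_div, le_div_iff₀ hqpos]
    nlinarith [mul_le_mul_of_nonneg_left hq (mul_nonneg hc0 hsn)]
  nlinarith [hinσ, hmain]
end
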